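/- Consider ℤ² with the supremum metric d_∞ and the measure μ defined on points by μ(n,m) = 4^{|m|} if n = 0 and μ(n,m) = 1 otherwise. Then lim_{r→∞} μ(B_{r+1}(0,0))/μ(B_r(0,0)) = 4, where B_r(0,0) = {(n,m) ∈ ℤ² : max(|n|,|m|) < r}. -/

import Mathlib

open MeasureTheory Metric Filter Set ENNReal

/-- The centered Hardy–Littlewood maximal function of `f` at `x`,
with respect to the measure `μ`. -/
noncomputable def centeredMaximal {X : Type*} [MeasurableSpace X] [PseudoMetricSpace X]
    (μ : Measure X) (f : X → ℝ) (x : X) : ℝ≥0∞ :=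
  ⨆ (r : ℝ) (_ : 0 < r),
    (∫⁻ y in Metric.ball x r, ENNReal.ofReal |f y| ∂μ) / μ (Metric.ball x r)

/-- The non-centered Hardy–Littlewood maximal function of `f` at `x`:
the supremum is taken over all open balls containing `x`. -/
noncomputable def noncenteredMaximal {X : Type*} [MeasurableSpace X] [PseudoMetricSpace X]
    (μ : Measure X) (f : X → ℝ) (x : X) : ℝ≥0∞ :=
  ⨆ (c : X) (r : ℝ) (_ : 0 < r) (_ : x ∈ Metric.ball c r),
    (∫⁻ y in Metric.ball c r, ENNReal.ofReal |f y| ∂μ) / μ (Metric.ball c r)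

/-- `f ∈ L¹_loc(μ)`: `∫_B |f| dμ < ∞` for every open ball `B`. -/
def LocallyIntegrableBall {X : Type*} [MeasurableSpace X] [PseudoMetricSpace X]
    (μ : Measure X) (f : X → ℝ) : Prop :=
  ∀ (c : X) (r : ℝ), 0 < r → (∫⁻ y in Metric.ball c r, ENNReal.ofReal |f y| ∂μ) < ⊤

namespace BRT4


noncomputable def tR (L : ℕ) : ℝ := 2*L*(2*L+1) + (2*(4:ℝ)^(L+1)-5)/3

def wR (p : ℤ × ℤ) : ℝ := if p.1 = 0 then (4:ℝ) ^ p.2.natAbs else 1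

noncomputable def sq (L : ℕ) : Finset (ℤ × ℤ) := Finset.Icc (-(L:ℤ)) L ×ˢ Finset.Icc (-(L:ℤ)) L

lemma icc_succ (L : ℕ) : Finset.Icc (-((L:ℤ)+1)) ((L:ℤ)+1)
    = insert (-((L:ℤ)+1)) (insert ((L:ℤ)+1) (Finset.Icc (-(L:ℤ)) L)) := by
  ext x; simp [Finset.mem_Icc]; omega

lemma AR_eq (L : ℕ) :
    ∑ m ∈ Finset.Icc (-(L:ℤ)) L, (4:ℝ) ^ m.natAbs = (2*(4:ℝ)^(L+1)-5)/3 := by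
  induction L with
  | zero => norm_num
  | succ L ih =>
      have h1 : (-((L:ℤ)+1)) ∉ insert ((L:ℤ)+1) (Finset.Icc (-(L:ℤ)) L) := by
        simp [Finset.mem_Icc]; omega
      have h2 : ((L:ℤ)+1) ∉ Finset.Icc (-(L:ℤ)) L := by
        simp [Finset.mem_Icc]
      have hc : ((L:ℕ)+1 : ℤ) = ((L:ℤ)+1) := by push_cast; ring
      rw [show ((L+1 : ℕ):ℤ) = (L:ℤ)+1 by norm_cast] at *
      rw [icc_succ, Finset.sum_insert h1, Finset.sum_insert h2, ih]
      have hn1 : ((-(((L:ℤ))+1)).natAbs) = L+1 := by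
        rw [Int.natAbs_neg]; omega
      have hn2 : ((((L:ℤ))+1).natAbs) = L+1 := by omega
      rw [hn1, hn2]
      rw [pow_succ ((4:ℝ)) (L+1)]
      ring

lemma card_icc (L : ℕ) : (Finset.Icc (-(L:ℤ)) L).card = 2*L+1 := by
  rw [Int.card_Icc]; omega

lemma sum_wR (L : ℕ) : ∑ p ∈ sq L, wR p = tR L := by
  rw [sq, Finset.sum_product]
  have inner : ∀ n : ℤ, ∑ m ∈ Finset.Icc (-(L:ℤ)) L, wR (n, m)
      = (2*L+1 : ℝ) + (if n = 0 then ((2*(4:ℝ)^(L+1)-5)/3 - (2*L+1)) else 0) := by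
    intro n
    by_cases h : n = 0
    · subst h
      have hw : ∀ m : ℤ, wR (0, m) = (4:ℝ) ^ m.natAbs := fun m => if_pos rfl
      simp only [hw]
      rw [AR_eq]
      simp
    · have hw : ∀ m : ℤ, wR (n, m) = 1 := fun m => if_neg h
      simp only [hw, Finset.sum_const, card_icc, nsmul_eq_mul, mul_one, if_neg h, add_zero]
      norm_cast
  simp_rw [inner]
  rw [Finset.sum_add_distrib, Finset.sum_const, card_icc,
    Finset.sum_ite_eq' (Finset.Icc (-(L:ℤ)) L) (0:ℤ)]
  have h0 : (0:ℤ) ∈ Finset.Icc (-(L:ℤ)) L := by simp [Finset.mem_Icc]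
  rw [if_pos h0, tR]
  push_cast
  ring



lemma wR_nonneg (p : ℤ × ℤ) : 0 ≤ wR p := by
  unfold wR; split_ifs <;> positivity

lemma w_eq (p : ℤ × ℤ) :
    (if p.1 = 0 then (4 : ℝ≥0∞) ^ p.2.natAbs else 1) = ENNReal.ofReal (wR p) := by
  unfold wR; split_ifs
  · rw [ENNReal.ofReal_pow (by norm_num)]
    norm_num
  · simp

lemma meas_sq (L : ℕ) :
    Measure.count.withDensity
      (fun p : ℤ × ℤ => if p.1 = 0 then (4 : ℝ≥0∞) ^ p.2.natAbs else 1) ↑(sq L)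
      = ENNReal.ofReal (tR L) := by
  rw [withDensity_apply _ ((sq L).countable_toSet.measurableSet)]
  rw [lintegral_finset]
  simp only [Measure.count_singleton, mul_one, w_eq]
  rw [← ENNReal.ofReal_sum_of_nonneg (fun p _ => wR_nonneg p), sum_wR]

lemma ball_eq_sq {r : ℝ} (hr : 1 ≤ r) :
    Metric.ball ((0,0) : ℤ × ℤ) r = ↑(sq (⌈r⌉ - 1).toNat) := by
  have h1 : (1:ℤ) ≤ ⌈r⌉ := by
    rw [Int.le_ceil_iff]; norm_num; linarith
  have key : ∀ a : ℤ, |(a:ℝ)| < r ↔ (-⌈r⌉ < a ∧ a < ⌈r⌉) := by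
    intro a; rw [← Int.cast_abs, ← Int.lt_ceil, abs_lt]
  ext p
  simp only [Metric.mem_ball, Prod.dist_eq, Int.dist_eq, sub_zero, sq,
    Finset.coe_product, Set.mem_prod, Finset.mem_coe, Finset.mem_Icc,
    Int.cast_zero, max_lt_iff, key]
  omega



lemma tR_pos (L : ℕ) : 0 < tR L := by
  have h4 : (1:ℝ) ≤ 4 ^ L := one_le_pow₀ (by norm_num)
  have hL : (0:ℝ) ≤ (L:ℝ) := Nat.cast_nonneg L
  unfold tR
  rw [pow_succ]
  nlinarith

lemma u_tendsto : Tendsto (fun L : ℕ => tR L / 4 ^ L) atTop (nhds (8/3)) := by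
  have h0 := tendsto_pow_const_div_const_pow_of_one_lt 0 (by norm_num : (1:ℝ) < 4)
  have h1 := tendsto_pow_const_div_const_pow_of_one_lt 1 (by norm_num : (1:ℝ) < 4)
  have h2 := tendsto_pow_const_div_const_pow_of_one_lt 2 (by norm_num : (1:ℝ) < 4)
  have heq : (fun L : ℕ => tR L / 4 ^ L)
      = fun L : ℕ => 4*((L:ℝ)^2/4^L) + 2*((L:ℝ)^1/4^L) + (8/3 - (5/3)*((L:ℝ)^0/4^L)) := by
    funext L
    have h4 : (4:ℝ)^L ≠ 0 := by positivity
    unfold tR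
    field_simp
    ring
  rw [heq]
  have := ((h2.const_mul 4).add (h1.const_mul 2)).add
    ((tendsto_const_nhds (x := (8/3:ℝ))).sub (h0.const_mul (5/3)))
  simpa using this

lemma ratio_tendsto : Tendsto (fun L : ℕ => tR (L+1) / tR L) atTop (nhds 4) := by
  have hu := u_tendsto
  have hu1 : Tendsto (fun L : ℕ => tR (L+1) / 4 ^ (L+1)) atTop (nhds (8/3)) :=
    hu.comp (tendsto_add_atTop_nat 1)
  have hdiv := (hu1.const_mul 4).div hu (by norm_num)
  have heq : (fun L : ℕ => 4 * (tR (L+1) / 4 ^ (L+1)) / (tR L / 4 ^ L))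
      = fun L : ℕ => tR (L+1) / tR L := by
    funext L
    have h4 : (4:ℝ)^L ≠ 0 := by positivity
    have ht : tR L ≠ 0 := (tR_pos L).ne'
    rw [pow_succ]
    field_simp
  have h4lim : (4 * (8/3) / (8/3) : ℝ) = 4 := by norm_num
  rw [h4lim] at hdiv
  exact hdiv.congr fun L => by simpa [Pi.div_apply] using congrFun heq L

end BRT4

open BRT4 in
/-- On `ℤ²` with the supremum metric and measure with point weights
`μ(n,m) = 4^{|m|}` if `n = 0` and `1` otherwise, one has
`lim_{r→∞} μ(B_{r+1}(0,0))/μ(B_r(0,0)) = 4`. -/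
theorem ball_ratio_tendsto_four (μ : Measure (ℤ × ℤ))
    (hμ : μ = Measure.count.withDensity
      (fun p : ℤ × ℤ => if p.1 = 0 then (4 : ℝ≥0∞) ^ p.2.natAbs else 1)) :
    Filter.Tendsto
      (fun r : ℝ => μ (Metric.ball ((0, 0) : ℤ × ℤ) (r + 1)) /
        μ (Metric.ball ((0, 0) : ℤ × ℤ) r))
      Filter.atTop (nhds 4) := by
  subst hμ
  set K : ℝ → ℕ := fun r => (⌈r⌉ - 1).toNat with hKdef
  have hK : Tendsto K atTop atTop := by
    rw [Filter.tendsto_atTop]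
    intro b
    filter_upwards [eventually_ge_atTop ((b:ℝ) + 1)] with r hr
    have hceil : ((b:ℤ) + 1) ≤ ⌈r⌉ := by
      rw [Int.le_ceil_iff]
      push_cast
      linarith
    simp only [hKdef]
    omega
  have hq : Tendsto (fun L : ℕ => ENNReal.ofReal (tR (L+1) / tR L)) atTop
      (nhds (ENNReal.ofReal 4)) :=
    ENNReal.tendsto_ofReal ratio_tendsto
  rw [show (ENNReal.ofReal 4) = (4 : ℝ≥0∞) by norm_num] at hq
  refine (hq.comp hK).congr' ?_
  filter_upwards [eventually_ge_atTop (1:ℝ)] with r hr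
  have hr1 : (1:ℝ) ≤ r + 1 := by linarith
  have hball1 : Metric.ball ((0,0) : ℤ × ℤ) r = ↑(BRT4.sq (K r)) := ball_eq_sq hr
  have hceil : (1:ℤ) ≤ ⌈r⌉ := by
    rw [Int.le_ceil_iff]; norm_num; linarith
  have hK2 : (⌈r + 1⌉ - 1).toNat = K r + 1 := by
    rw [Int.ceil_add_one]
    simp only [hKdef]
    omega
  have hball2 : Metric.ball ((0,0) : ℤ × ℤ) (r + 1) = ↑(BRT4.sq (K r + 1)) := by
    rw [ball_eq_sq hr1, hK2]
  simp only [Function.comp]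
  rw [hball1, hball2, meas_sq, meas_sq, ← ENNReal.ofReal_div_of_pos (tR_pos (K r))]
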